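/- arXiv:2205.05800 — 2 statements merged into one kernel-verified Lean document; each statement's English description precedes it below -/
import Mathlib

section
/- Let P be a row-stochastic matrix with stationary distribution ν satisfying ‖P^{t_mix} − 1ν^T‖_∞ ≤ 1/2 for a positive integer t_mix, and let c ∈ R^S with ‖c‖_∞ ≤ c̄. Then for any integer T' ≥ t_mix, the truncation error satisfies ‖Σ_{t=T'}^{∞} (1ν^T − P^t) c‖_∞ ≤ 2 c̄ · t_mix · (1/2)^{⌊T'/t_mix⌋}; in particular the series converges absolutely. -/
open Matrix BigOperators

/-- The ℓ∞ operator norm of a matrix: maximum absolute row sum. -/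
noncomputable def linftyNorm {S : Type*} [Fintype S] [Nonempty S] (A : Matrix S S ℝ) : ℝ :=
  Finset.univ.sup' Finset.univ_nonempty (fun i => ∑ j, |A i j|)

section aux

variable {S : Type*} [Fintype S] [Nonempty S]

lemma rowsum_le_linftyNorm (A : Matrix S S ℝ) (i : S) :
    ∑ j, |A i j| ≤ linftyNorm A := by
  unfold linftyNorm
  exact Finset.le_sup' (fun i => ∑ j, |A i j|) (Finset.mem_univ i)

lemma linftyNorm_le (A : Matrix S S ℝ) {m : ℝ} (h : ∀ i, ∑ j, |A i j| ≤ m) :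
    linftyNorm A ≤ m :=
  Finset.sup'_le _ _ fun i _ => h i

lemma linftyNorm_nonneg (A : Matrix S S ℝ) : 0 ≤ linftyNorm A := by
  obtain ⟨i⟩ := (inferInstance : Nonempty S)
  exact le_trans (Finset.sum_nonneg fun j _ => abs_nonneg _) (rowsum_le_linftyNorm A i)

lemma linftyNorm_sub_comm (A B : Matrix S S ℝ) :
    linftyNorm (A - B) = linftyNorm (B - A) := by
  unfold linftyNorm
  apply Finset.sup'_congr _ rfl
  intro i _
  exact Finset.sum_congr rfl fun j _ => by simp [Matrix.sub_apply, abs_sub_comm]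

lemma linftyNorm_mul_le (A B : Matrix S S ℝ) :
    linftyNorm (A * B) ≤ linftyNorm A * linftyNorm B := by
  apply linftyNorm_le
  intro i
  calc ∑ j, |(A * B) i j| ≤ ∑ j, ∑ k, |A i k| * |B k j| := by
        refine Finset.sum_le_sum fun j _ => ?_
        rw [Matrix.mul_apply]
        exact le_trans (Finset.abs_sum_le_sum_abs _ _)
          (le_of_eq (Finset.sum_congr rfl fun k _ => abs_mul _ _))
    _ = ∑ k, |A i k| * ∑ j, |B k j| := by
        rw [Finset.sum_comm]
        exact Finset.sum_congr rfl fun k _ => (Finset.mul_sum _ _ _).symm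
    _ ≤ ∑ k, |A i k| * linftyNorm B :=
        Finset.sum_le_sum fun k _ =>
          mul_le_mul_of_nonneg_left (rowsum_le_linftyNorm B k) (abs_nonneg _)
    _ = (∑ k, |A i k|) * linftyNorm B := (Finset.sum_mul _ _ _).symm
    _ ≤ linftyNorm A * linftyNorm B :=
        mul_le_mul_of_nonneg_right (rowsum_le_linftyNorm A i) (linftyNorm_nonneg B)

lemma abs_mulVec_le (A : Matrix S S ℝ) (c : S → ℝ) {cbar : ℝ}
    (hc : ∀ j, |c j| ≤ cbar) (s : S) :
    |A.mulVec c s| ≤ linftyNorm A * cbar := by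
  have hcb : 0 ≤ cbar := le_trans (abs_nonneg _) (hc s)
  calc |A.mulVec c s| ≤ ∑ j, |A s j| * |c j| := by
        rw [Matrix.mulVec, dotProduct]
        exact le_trans (Finset.abs_sum_le_sum_abs _ _)
          (le_of_eq (Finset.sum_congr rfl fun j _ => abs_mul _ _))
    _ ≤ ∑ j, |A s j| * cbar :=
        Finset.sum_le_sum fun j _ => mul_le_mul_of_nonneg_left (hc j) (abs_nonneg _)
    _ = (∑ j, |A s j|) * cbar := (Finset.sum_mul _ _ _).symm
    _ ≤ linftyNorm A * cbar := mul_le_mul_of_nonneg_right (rowsum_le_linftyNorm A s) hcb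

end aux

/-- the truncation error `Σ_{t=T'}^∞ (1νᵀ − P^t) c` converges absolutely
(componentwise) and is bounded in ℓ∞-norm by `2 c̄ t_mix (1/2)^{⌊T'/t_mix⌋}`. -/
theorem stmt4 {S : Type*} [Fintype S] [Nonempty S] [DecidableEq S]
    (P : Matrix S S ℝ) (ν : S → ℝ)
    (hPnn : ∀ i j, 0 ≤ P i j) (hProw : ∀ i, ∑ j, P i j = 1)
    (hνnn : ∀ j, 0 ≤ ν j) (hνsum : ∑ j, ν j = 1)
    (hstat : ∀ j, ∑ i, ν i * P i j = ν j)
    (tmix : ℕ) (htmix : 1 ≤ tmix)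
    (hmix : linftyNorm (P ^ tmix - Matrix.of (fun _ j => ν j)) ≤ 1 / 2)
    (c : S → ℝ) (cbar : ℝ) (hc : ∀ i, |c i| ≤ cbar)
    (T' : ℕ) (hT' : tmix ≤ T') :
    (∀ s : S, Summable (fun t : ℕ =>
        |((Matrix.of (fun _ j => ν j) - P ^ (T' + t)).mulVec c) s|)) ∧
    (∀ s : S, |∑' t : ℕ, ((Matrix.of (fun _ j => ν j) - P ^ (T' + t)).mulVec c) s|
        ≤ 2 * cbar * tmix * (1 / 2 : ℝ) ^ (T' / tmix)) := by
  have htpos : 0 < tmix := htmix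
  haveI : NeZero tmix := ⟨Nat.pos_iff_ne_zero.mp htpos⟩
  set Pi : Matrix S S ℝ := Matrix.of (fun _ j => ν j) with hPi
  have hcb : 0 ≤ cbar := le_trans (abs_nonneg _) (hc (Classical.arbitrary S))
  -- basic products
  have hPpow : ∀ k : ℕ, (∀ i j, 0 ≤ (P ^ k) i j) ∧ (∀ i, ∑ j, (P ^ k) i j = 1) := by
    intro k
    induction k with
    | zero => constructor <;> intro i <;> simp [Matrix.one_apply]
      <;> intro j <;> by_cases h : i = j <;> simp [Matrix.one_apply, h]
    | succ k ih =>
      rw [pow_succ]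
      constructor
      · intro i j
        rw [Matrix.mul_apply]
        exact Finset.sum_nonneg fun l _ => mul_nonneg (ih.1 i l) (hPnn l j)
      · intro i
        simp only [Matrix.mul_apply]
        rw [Finset.sum_comm]
        calc ∑ l, ∑ j, (P ^ k) i l * P l j = ∑ l, (P ^ k) i l * ∑ j, P l j := by
              exact Finset.sum_congr rfl fun l _ => (Finset.mul_sum _ _ _).symm
          _ = ∑ l, (P ^ k) i l := by simp [hProw]
          _ = 1 := ih.2 i
  have hPowPi : ∀ k : ℕ, P ^ k * Pi = Pi := by
    intro k
    ext i j
    rw [Matrix.mul_apply]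
    simp only [hPi, Matrix.of_apply]
    rw [← Finset.sum_mul, (hPpow k).2 i, one_mul]
  have hPiPow : ∀ k : ℕ, Pi * P ^ k = Pi := by
    intro k
    induction k with
    | zero => simp
    | succ k ih =>
      rw [pow_succ, ← Matrix.mul_assoc, ih]
      ext i j
      rw [Matrix.mul_apply]
      simp only [hPi, Matrix.of_apply]
      exact hstat j
  have hPiPi : Pi * Pi = Pi := by
    have := hPiPow 0
    simpa using by
      ext i j
      rw [Matrix.mul_apply]
      simp only [hPi, Matrix.of_apply]
      rw [← Finset.sum_mul, hνsum, one_mul]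
  -- norm of powers of P is at most 1
  have hNP : ∀ k : ℕ, linftyNorm (P ^ k) ≤ 1 := by
    intro k
    apply linftyNorm_le
    intro i
    calc ∑ j, |(P ^ k) i j| = ∑ j, (P ^ k) i j :=
          Finset.sum_congr rfl fun j _ => abs_of_nonneg ((hPpow k).1 i j)
      _ = 1 := (hPpow k).2 i
      _ ≤ 1 := le_refl 1
  -- (P^tmix - Pi)^q = P^(q*tmix) - Pi for q ≥ 1
  have hBpow : ∀ q : ℕ, 1 ≤ q → (P ^ tmix - Pi) ^ q = P ^ (q * tmix) - Pi := by
    intro q hq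
    induction q with
    | zero => omega
    | succ q ih =>
      rcases Nat.eq_or_lt_of_le hq with h1 | h1
      · simp [← h1, one_mul]
      · have hq1 : 1 ≤ q := by omega
        rw [pow_succ, ih hq1, Matrix.sub_mul, Matrix.mul_sub, Matrix.mul_sub,
          hPowPi, hPiPow, hPiPi, ← pow_add]
        ring_nf
        rw [show q * tmix + tmix = (q + 1) * tmix by ring]
        abel
  -- norm bound for powers of B
  have hBnorm : ∀ q : ℕ, 1 ≤ q → linftyNorm ((P ^ tmix - Pi) ^ q) ≤ (1 / 2 : ℝ) ^ q := by
    intro q hq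
    induction q with
    | zero => omega
    | succ q ih =>
      rcases Nat.eq_or_lt_of_le hq with h1 | h1
      · simpa [← h1] using hmix
      · have hq1 : 1 ≤ q := by omega
        rw [pow_succ, pow_succ]
        calc linftyNorm ((P ^ tmix - Pi) ^ q * (P ^ tmix - Pi))
            ≤ linftyNorm ((P ^ tmix - Pi) ^ q) * linftyNorm (P ^ tmix - Pi) :=
              linftyNorm_mul_le _ _
          _ ≤ (1 / 2 : ℝ) ^ q * (1 / 2 : ℝ) := by
              apply mul_le_mul (ih hq1) hmix (linftyNorm_nonneg _)
              positivity
  -- monotonicity: for a ≤ b, ‖P^b - Pi‖ ≤ ‖P^a - Pi‖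
  have hmono : ∀ a b : ℕ, a ≤ b → linftyNorm (P ^ b - Pi) ≤ linftyNorm (P ^ a - Pi) := by
    intro a b hab
    have hdecomp : P ^ b - Pi = P ^ (b - a) * (P ^ a - Pi) := by
      rw [Matrix.mul_sub, ← pow_add, hPowPi, Nat.sub_add_cancel hab]
    rw [hdecomp]
    calc linftyNorm (P ^ (b - a) * (P ^ a - Pi))
        ≤ linftyNorm (P ^ (b - a)) * linftyNorm (P ^ a - Pi) := linftyNorm_mul_le _ _
      _ ≤ 1 * linftyNorm (P ^ a - Pi) :=
          mul_le_mul_of_nonneg_right (hNP _) (linftyNorm_nonneg _)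
      _ = linftyNorm (P ^ a - Pi) := one_mul _
  -- key pointwise bound
  have hkey : ∀ t : ℕ, ∀ s : S,
      |((Pi - P ^ (T' + t)).mulVec c) s|
        ≤ cbar * (1 / 2 : ℝ) ^ (T' / tmix) * (1 / 2 : ℝ) ^ (t / tmix) := by
    intro t s
    set q : ℕ := (T' + t) / tmix with hq
    have hq1 : 1 ≤ q := (Nat.one_le_div_iff htpos).mpr (le_trans hT' (Nat.le_add_right _ _))
    have hqmul : q * tmix ≤ T' + t := Nat.div_mul_le_self _ _
    have hnorm : linftyNorm (Pi - P ^ (T' + t)) ≤ (1 / 2 : ℝ) ^ q := by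
      rw [linftyNorm_sub_comm]
      calc linftyNorm (P ^ (T' + t) - Pi) ≤ linftyNorm (P ^ (q * tmix) - Pi) :=
            hmono _ _ hqmul
        _ = linftyNorm ((P ^ tmix - Pi) ^ q) := by rw [hBpow q hq1]
        _ ≤ (1 / 2 : ℝ) ^ q := hBnorm q hq1
    have hdiv : T' / tmix + t / tmix ≤ q := by
      rw [hq, Nat.le_div_iff_mul_le htpos, add_mul]
      exact add_le_add (Nat.div_mul_le_self _ _) (Nat.div_mul_le_self _ _)
    calc |((Pi - P ^ (T' + t)).mulVec c) s| ≤ linftyNorm (Pi - P ^ (T' + t)) * cbar :=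
          abs_mulVec_le _ _ hc s
      _ ≤ (1 / 2 : ℝ) ^ q * cbar := mul_le_mul_of_nonneg_right hnorm hcb
      _ ≤ (1 / 2 : ℝ) ^ (T' / tmix + t / tmix) * cbar := by
          apply mul_le_mul_of_nonneg_right _ hcb
          exact pow_le_pow_of_le_one (by norm_num) (by norm_num) hdiv
      _ = cbar * (1 / 2 : ℝ) ^ (T' / tmix) * (1 / 2 : ℝ) ^ (t / tmix) := by
          rw [pow_add]; ring
  -- summability of the comparison series
  have hFsum : Summable (fun t : ℕ => (1 / 2 : ℝ) ^ (t / tmix)) := by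
    have he : Summable (fun p : ℕ × Fin tmix => (1 / 2 : ℝ) ^ p.1) := by
      rw [summable_prod_of_nonneg (fun p => by positivity)]
      constructor
      · intro q; exact Summable.of_finite
      · simp only [tsum_fintype, Finset.sum_const, Finset.card_univ, Fintype.card_fin,
          nsmul_eq_mul]
        exact (summable_geometric_of_lt_one (by norm_num) (by norm_num)).mul_left _
    have := he.comp_injective (Nat.divModEquiv tmix).injective
    simpa [Function.comp_def, Nat.divModEquiv] using this
  have hFtsum : ∑' t : ℕ, (1 / 2 : ℝ) ^ (t / tmix) = 2 * tmix := by
    have he : ∑' t : ℕ, (1 / 2 : ℝ) ^ (t / tmix)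
        = ∑' p : ℕ × Fin tmix, (1 / 2 : ℝ) ^ p.1 := by
      rw [← Equiv.tsum_eq (Nat.divModEquiv tmix) (fun p : ℕ × Fin tmix => (1/2:ℝ) ^ p.1)]
      apply tsum_congr
      intro t
      simp [Nat.divModEquiv]
    rw [he, Summable.tsum_prod' ?_ (fun q => Summable.of_finite)]
    · simp only [tsum_fintype, Finset.sum_const, Finset.card_univ, Fintype.card_fin,
        nsmul_eq_mul]
      rw [tsum_mul_left, tsum_geometric_of_lt_one (by norm_num) (by norm_num)]
      norm_num
      ring
    · rw [summable_prod_of_nonneg (fun p => by positivity)]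
      constructor
      · intro q; exact Summable.of_finite
      · simp only [tsum_fintype, Finset.sum_const, Finset.card_univ, Fintype.card_fin,
          nsmul_eq_mul]
        exact (summable_geometric_of_lt_one (by norm_num) (by norm_num)).mul_left _
  have hgsum : Summable (fun t : ℕ =>
      cbar * (1 / 2 : ℝ) ^ (T' / tmix) * (1 / 2 : ℝ) ^ (t / tmix)) :=
    hFsum.mul_left _
  have hsummable : ∀ s : S, Summable (fun t : ℕ =>
      |((Pi - P ^ (T' + t)).mulVec c) s|) := by
    intro s
    apply Summable.of_nonneg_of_le (fun t => abs_nonneg _) (fun t => hkey t s) hgsum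
  refine ⟨hsummable, ?_⟩
  intro s
  have habs : Summable (fun t : ℕ => ((Pi - P ^ (T' + t)).mulVec c) s) :=
    (hsummable s).of_abs
  calc |∑' t : ℕ, ((Pi - P ^ (T' + t)).mulVec c) s|
      ≤ ∑' t : ℕ, |((Pi - P ^ (T' + t)).mulVec c) s| := by
        simpa [Real.norm_eq_abs] using
          norm_tsum_le_tsum_norm (f := fun t : ℕ => ((Pi - P ^ (T' + t)).mulVec c) s)
            (by simpa [Real.norm_eq_abs] using hsummable s)
    _ ≤ ∑' t : ℕ, cbar * (1 / 2 : ℝ) ^ (T' / tmix) * (1 / 2 : ℝ) ^ (t / tmix) :=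
        Summable.tsum_le_tsum (fun t => hkey t s) (hsummable s) hgsum
    _ = cbar * (1 / 2 : ℝ) ^ (T' / tmix) * (2 * tmix) := by
        rw [tsum_mul_left, hFtsum]
    _ = 2 * cbar * tmix * (1 / 2 : ℝ) ^ (T' / tmix) := by ring
end

section
/- Performance difference lemma for average-reward MDPs: let π and π' be two policies on a finite MDP with transition kernel 𝖯 and cost c, let ν^{π'} be a stationary distribution of the state chain induced by π', let ρ(π) be the average cost of π, and let Q̄^π be any solution of the Bellman equation Q̄^π(s,a) = c(s,a) + h^π(s) − ρ(π) + Σ_{s'} 𝖯(s'|s,a) Σ_{a'} π(a'|s') Q̄^π(s',a'). Then ρ(π') − ρ(π) = E_{s∼ν^{π'}}[ ⟨Q̄^π(s,·), π'(·|s) − π(·|s)⟩ + h^{π'}(s) − h^π(s) ], where ρ(π') = E_{s∼ν^{π'}}[c^{π'}(s) + h^{π'}(s)] with c^{π'}(s) = Σ_a π'(a|s) c(s,a). -/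
open BigOperators

/-- performance difference lemma for average-reward MDPs:
`ρ(π') − ρ(π) = E_{s∼ν^{π'}}[⟨Q̄^π(s,·), π'(·|s) − π(·|s)⟩ + h^{π'}(s) − h^π(s)]`,
where `ρ(π') = E_{s∼ν^{π'}}[c^{π'}(s) + h^{π'}(s)]`. -/
theorem stmt15 {S A : Type*} [Fintype S] [Fintype A]
    (Pr : S → A → S → ℝ)
    (hPrnn : ∀ s a s', 0 ≤ Pr s a s') (hPrsum : ∀ s a, ∑ s', Pr s a s' = 1)
    (c : S → A → ℝ) (h h' : S → ℝ)
    (π π' : S → A → ℝ)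
    (hπnn : ∀ s a, 0 ≤ π s a) (hπsum : ∀ s, ∑ a, π s a = 1)
    (hπ'nn : ∀ s a, 0 ≤ π' s a) (hπ'sum : ∀ s, ∑ a, π' s a = 1)
    (ν' : S → ℝ) (hν'nn : ∀ s, 0 ≤ ν' s) (hν'sum : ∑ s, ν' s = 1)
    (hstat : ∀ s', ∑ s, ν' s * ∑ a, π' s a * Pr s a s' = ν' s')
    (ρπ : ℝ) (Qbar : S → A → ℝ)
    (hBellman : ∀ s a, Qbar s a
        = c s a + h s - ρπ + ∑ s', Pr s a s' * ∑ a', π s' a' * Qbar s' a') :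
    (∑ s, ν' s * ((∑ a, π' s a * c s a) + h' s)) - ρπ
      = ∑ s, ν' s * ((∑ a, Qbar s a * (π' s a - π s a)) + h' s - h s) := by
  obtain ⟨V, hV⟩ : ∃ V : S → ℝ, ∀ s, V s = ∑ a, π s a * Qbar s a :=
    ⟨fun s => ∑ a, π s a * Qbar s a, fun _ => rfl⟩
  -- per-state expansion of the Bellman equation averaged over π'
  have step : ∀ s, ∑ a, π' s a * Qbar s a
      = (∑ a, π' s a * c s a) + h s - ρπ
        + ∑ a, π' s a * ∑ s', Pr s a s' * V s' := by
    intro s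
    have e1 : ∑ a, π' s a * Qbar s a
        = ∑ a, (π' s a * c s a + π' s a * (h s - ρπ)
            + π' s a * ∑ s', Pr s a s' * V s') := by
      refine Finset.sum_congr rfl fun a _ => ?_
      rw [hBellman s a]; simp only [hV]; ring
    rw [e1, Finset.sum_add_distrib, Finset.sum_add_distrib, ← Finset.sum_mul,
      hπ'sum s, one_mul]
    ring
  -- the stationarity/swap step
  have swap : ∑ s, ν' s * ∑ a, π' s a * ∑ s', Pr s a s' * V s'
      = ∑ s', ν' s' * V s' := by
    have e1 : ∑ s, ν' s * ∑ a, π' s a * ∑ s', Pr s a s' * V s'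
        = ∑ s, ∑ a, ∑ s', ν' s * π' s a * Pr s a s' * V s' := by
      refine Finset.sum_congr rfl fun s _ => ?_
      rw [Finset.mul_sum]
      refine Finset.sum_congr rfl fun a _ => ?_
      rw [Finset.mul_sum, Finset.mul_sum]
      refine Finset.sum_congr rfl fun s' _ => ?_
      ring
    have e2 : ∑ s, ∑ a, ∑ s', ν' s * π' s a * Pr s a s' * V s'
        = ∑ s', ∑ s, ∑ a, ν' s * π' s a * Pr s a s' * V s' := by
      calc ∑ s, ∑ a, ∑ s', ν' s * π' s a * Pr s a s' * V s'
            = ∑ s, ∑ s', ∑ a, ν' s * π' s a * Pr s a s' * V s' :=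
              Finset.sum_congr rfl fun s _ => Finset.sum_comm
        _ = ∑ s', ∑ s, ∑ a, ν' s * π' s a * Pr s a s' * V s' := Finset.sum_comm
    have e3 : ∀ s', ∑ s, ∑ a, ν' s * π' s a * Pr s a s' * V s'
        = ν' s' * V s' := by
      intro s'
      have : ∑ s, ∑ a, ν' s * π' s a * Pr s a s' * V s'
          = (∑ s, ν' s * ∑ a, π' s a * Pr s a s') * V s' := by
        rw [Finset.sum_mul]
        refine Finset.sum_congr rfl fun s _ => ?_
        rw [Finset.mul_sum, Finset.sum_mul]
        refine Finset.sum_congr rfl fun a _ => ?_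
        ring
      rw [this, hstat s']
    rw [e1, e2]
    exact Finset.sum_congr rfl fun s' _ => e3 s'
  -- key identity
  have key : ∑ s, ν' s * ∑ a, π' s a * Qbar s a
      = (∑ s, ν' s * ∑ a, π' s a * c s a) + (∑ s, ν' s * h s) - ρπ
        + ∑ s, ν' s * V s := by
    have e1 : ∑ s, ν' s * ∑ a, π' s a * Qbar s a
        = ∑ s, (ν' s * ∑ a, π' s a * c s a + ν' s * h s - ν' s * ρπ
            + ν' s * ∑ a, π' s a * ∑ s', Pr s a s' * V s') := by
      refine Finset.sum_congr rfl fun s _ => ?_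
      rw [step s]; ring
    rw [e1]
    rw [Finset.sum_add_distrib, Finset.sum_sub_distrib, Finset.sum_add_distrib,
      ← Finset.sum_mul, hν'sum, one_mul, swap]
  -- expand both sides and finish
  have lhs : (∑ s, ν' s * ((∑ a, π' s a * c s a) + h' s))
      = (∑ s, ν' s * ∑ a, π' s a * c s a) + ∑ s, ν' s * h' s := by
    rw [← Finset.sum_add_distrib]
    exact Finset.sum_congr rfl fun s _ => by ring
  have rhs : ∑ s, ν' s * ((∑ a, Qbar s a * (π' s a - π s a)) + h' s - h s)
      = (∑ s, ν' s * ∑ a, π' s a * Qbar s a) - (∑ s, ν' s * V s)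
        + (∑ s, ν' s * h' s) - ∑ s, ν' s * h s := by
    have e : ∀ s, ν' s * ((∑ a, Qbar s a * (π' s a - π s a)) + h' s - h s)
        = ν' s * ∑ a, π' s a * Qbar s a - ν' s * V s + ν' s * h' s
          - ν' s * h s := by
      intro s
      have : ∑ a, Qbar s a * (π' s a - π s a)
          = (∑ a, π' s a * Qbar s a) - V s := by
        rw [hV s, ← Finset.sum_sub_distrib]
        exact Finset.sum_congr rfl fun a _ => by ring
      rw [this]; ring
    rw [Finset.sum_congr rfl fun s _ => e s, Finset.sum_sub_distrib,
      Finset.sum_add_distrib, Finset.sum_sub_distrib]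
  rw [lhs, rhs, key]
  ring
end
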